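/- Let G be a finite abelian group whose 2-rank is not 1 and with exp(G) > 2, and let A = G \ {a, a'} for distinct a, a' ∈ G. Then A is (|G|−2)-barycentric if and only if a + a' ∈ 2·G. -/

import Mathlib

/-- A finset `S` of an abelian group is `k`-barycentric if it has `k` elements
and the sum of its elements equals `k • g` for some `g ∈ S`. -/
def IsBarycentric {G : Type*} [AddCommGroup G] (k : ℕ) (S : Finset G) : Prop :=
  S.card = k ∧ ∃ g ∈ S, ∑ x ∈ S, x = k • g

/-- The `k`-th barycentric Olson constant: the smallest `ℓ` such that every subset
of `G` with at least `ℓ` elements contains a `k`-barycentric subset. -/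
noncomputable def BO (k : ℕ) (G : Type*) [AddCommGroup G] [Fintype G] : ℕ :=
  sInf {ℓ : ℕ | ∀ A : Finset G, ℓ ≤ A.card → ∃ B ⊆ A, IsBarycentric k B}

/-- The 2-rank of a finite abelian group `G`: the number of invariant factors of `G`
divisible by 2, equivalently `log₂` of the number of solutions of `2 • g = 0`. -/
noncomputable def twoRank (G : Type*) [AddCommGroup G] : ℕ :=
  Nat.log 2 (Nat.card {g : G // 2 • g = 0})

theorem pi_sum_zero {r : ℕ} (hr : 2 ≤ r) : ∑ v : Fin r → ZMod 2, v = 0 := by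
  funext i
  rw [Finset.sum_apply]
  obtain ⟨j, hj⟩ : ∃ j : Fin r, j ≠ i := by
    have : Nontrivial (Fin r) := Fin.nontrivial_iff_two_le.mpr hr
    exact exists_ne i
  refine Finset.sum_ninvolution (fun v => v + fun k => if k = j then 1 else 0) ?_ ?_ ?_ ?_
  · intro v
    simp only [Pi.add_apply, if_neg (Ne.symm hj), add_zero]
    exact CharTwo.add_self_eq_zero (v i)
  · intro v hv h
    have := congrFun h j
    simp at this
  · intro v; exact Finset.mem_univ _
  · intro v
    funext k
    simp only [Pi.add_apply]
    by_cases hk : k = j <;> simp [hk]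
    subst hk; change v k + 1 + 1 = v k
    rw [add_assoc, CharTwo.add_self_eq_zero, add_zero]

def torsion2 (G : Type*) [AddCommGroup G] : AddSubgroup G where
  carrier := {x | 2 • x = 0}
  zero_mem' := by simp
  add_mem' := by
    intro a b ha hb
    simp only [Set.mem_setOf_eq] at *
    rw [smul_add, ha, hb, add_zero]
  neg_mem' := by
    intro a ha
    simp only [Set.mem_setOf_eq] at *
    rw [smul_neg, ha, neg_zero]

theorem sum_univ_eq_zero (G : Type*) [AddCommGroup G] [Fintype G] [DecidableEq G]
    (h2 : twoRank G ≠ 1) : ∑ x : G, x = 0 := by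
  classical
  letI : Module (ZMod 2) (torsion2 G) := AddCommGroup.zmodModule (n := 2) (fun x => by
    ext
    push_cast
    exact x.2)
  haveI : Module.Finite (ZMod 2) (torsion2 G) := inferInstance
  set r := Module.finrank (ZMod 2) (torsion2 G) with hr
  let b := Module.finBasis (ZMod 2) (torsion2 G)
  let e := b.equivFun
  have hcard : Nat.card (torsion2 G) = 2 ^ r := by
    rw [Nat.card_congr e.toEquiv]
    simp [Nat.card_eq_fintype_card]
    rfl
  have hrank : twoRank G = r := by
    have : Nat.card {g : G // 2 • g = 0} = Nat.card (torsion2 G) :=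
      Nat.card_congr (Equiv.subtypeEquivRight fun x => Iff.rfl)
    rw [twoRank, this, hcard, Nat.log_pow one_lt_two]
  rw [hrank] at h2
  -- step A : non 2-torsion part cancels
  have hA : ∑ x ∈ Finset.univ.filter (fun x : G => ¬ (2 • x = 0)), x = 0 := by
    refine Finset.sum_involution (fun a _ => -a) (fun a _ => add_neg_cancel a) ?_ ?_ ?_
    · intro a ha _
      simp only [Finset.mem_filter] at ha
      intro h
      have h' : -a = a := h
      refine ha.2 ?_
      rw [two_nsmul]
      nth_rewrite 2 [← h']
      exact add_neg_cancel a
    · intro a ha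
      simp only [Finset.mem_filter, Finset.mem_univ, true_and] at ha ⊢
      rw [smul_neg, neg_eq_zero]; exact ha
    · intro a ha; exact neg_neg a
  have hsplit : ∑ x : G, x = ∑ x ∈ Finset.univ.filter (fun x : G => 2 • x = 0), x := by
    rw [← Finset.sum_filter_add_sum_filter_not Finset.univ (fun x : G => 2 • x = 0), hA, add_zero]
  have hsub : ∑ x ∈ Finset.univ.filter (fun x : G => 2 • x = 0), x
      = ((∑ x : torsion2 G, x : torsion2 G) : G) := by
    rw [AddSubmonoidClass.coe_finset_sum]
    exact Finset.sum_subtype _ (fun x => by simp [torsion2, AddSubgroup.mem_mk]) _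
  have hT : (∑ x : torsion2 G, x : torsion2 G) = 0 := by
    rcases Nat.lt_or_ge r 2 with hlt | hge
    · interval_cases r
      · haveI : Subsingleton (torsion2 G) := by
          rw [← Module.finrank_zero_iff (R := ZMod 2)]
          exact hr.symm
        exact Subsingleton.elim _ _
      · exact absurd rfl h2
    · have : ∑ x : torsion2 G, x = ∑ v : Fin r → ZMod 2, e.symm v :=
        Fintype.sum_equiv e.toEquiv _ _ (fun x => (e.symm_apply_apply x).symm)
      rw [this, ← map_sum, pi_sum_zero hge, map_zero]
  rw [hsplit, hsub, hT, AddSubgroup.coe_zero]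

theorem barycentric_complement_pair (G : Type*) [AddCommGroup G] [Fintype G]
    [DecidableEq G] (h2 : twoRank G ≠ 1) (hexp : 2 < AddMonoid.exponent G)
    (a a' : G) (haa' : a ≠ a') :
    IsBarycentric (Fintype.card G - 2) (Finset.univ \ {a, a'}) ↔
      ∃ g : G, 2 • g = a + a' := by
  unfold IsBarycentric
  classical
  set n := Fintype.card G with hn
  have hsub : ({a, a'} : Finset G) ⊆ Finset.univ := Finset.subset_univ _
  have hc2 : ({a, a'} : Finset G).card = 2 := Finset.card_pair haa'
  have hcard : (Finset.univ \ {a, a'} : Finset G).card = n - 2 := by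
    rw [Finset.card_sdiff_of_subset hsub, hc2, Finset.card_univ]
  have hn2 : 2 ≤ n := by
    exact le_trans hexp.le (Nat.le_of_dvd Fintype.card_pos AddGroup.exponent_dvd_card)
  have hsum0 : ∑ x : G, x = 0 := sum_univ_eq_zero G h2
  have hsumA : ∑ x ∈ (Finset.univ \ {a, a'} : Finset G), x = -(a + a') := by
    have := Finset.sum_sdiff (f := fun x : G => x) hsub
    rw [Finset.sum_pair haa', hsum0] at this
    exact eq_neg_of_add_eq_zero_left this
  have hsmul : ∀ g : G, (n - 2) • g = -(2 • g) := by
    intro g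
    refine eq_neg_of_add_eq_zero_left ?_
    rw [← add_nsmul, Nat.sub_add_cancel hn2, hn, card_nsmul_eq_zero]
  constructor
  · rintro ⟨-, g, hg, hsum⟩
    rw [hsumA, hsmul g, neg_inj] at hsum
    exact ⟨g, hsum.symm⟩
  · rintro ⟨g, hg⟩
    refine ⟨hcard, g, ?_, ?_⟩
    · simp only [Finset.mem_sdiff, Finset.mem_univ, true_and, Finset.mem_insert,
        Finset.mem_singleton]
      push_neg
      constructor
      · rintro rfl
        rw [two_nsmul] at hg
        exact haa' (add_left_cancel hg)
      · rintro rfl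
        rw [two_nsmul, add_comm a] at hg
        exact haa' (add_left_cancel hg).symm
    · rw [hsumA, hsmul g, hg]
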